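/- Let X be a finite connected graph and let Q be the simple random walk kernel, Q(x,y) = 1/d_x for y ∼ x, with stationary measure π(x) = d_x / Σ_v d_v, and let θ be the logarithmic mean. Assume the global gradient estimate with constant κ holds: for all probability densities ρ ∈ D(X), all f : X → ℝ and all t ≥ 0, (1/2)·Σ_{u,v} (P_t f(v) − P_t f(u))² θ(ρ(u),ρ(v)) Q(u,v) π(u) ≤ e^{−2κt} · (1/2)·Σ_{u,v} (f(v) − f(u))² θ(P_t ρ(u), P_t ρ(v)) Q(u,v) π(u). Then for all f : X → ℝ, x ∈ X and t ≥ 0, Γ(P_t f)(x) ≤ c · e^{−2κt} · ‖P_t Γ(f)‖_∞, where c = D·log D/(D − 1) and D ≥ 2 is the maximal vertex degree. -/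

import Mathlib

/-- The logarithmic mean: `θ(a,b) = (a-b)/(log a - log b)` for distinct positive `a,b`,
`θ(a,a) = a`, and `θ(a,b) = 0` when `a = 0` or `b = 0`. -/
noncomputable def logMean (a b : ℝ) : ℝ :=
  if a = 0 ∨ b = 0 then 0
  else if a = b then a
  else (a - b) / (Real.log a - Real.log b)

/-- The discrete Laplacian `Δf(x) = Σ_y (f(y)-f(x)) Q(x,y)`. -/
noncomputable def lap {X : Type*} [Fintype X] (Q : X → X → ℝ) (f : X → ℝ) (x : X) : ℝ :=
  ∑ y, (f y - f x) * Q x y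

/-- The heat semigroup `P_t = e^{tΔ}`, realized via the matrix exponential of `t•(Q - I)`.
(When `Σ_y Q(x,y) = 1`, the matrix `Q - I` acts on functions exactly as `Δ` does.) -/
noncomputable def heat {X : Type*} [Fintype X] [DecidableEq X] (Q : X → X → ℝ) (t : ℝ)
    (f : X → ℝ) : X → ℝ :=
  (NormedSpace.exp (t • (Matrix.of fun x y => Q x y - if x = y then (1 : ℝ) else 0))).mulVec f

/-- The carré du champ operator `Γ(f)(x) = Σ_y (f(y)-f(x))² Q(x,y)`. -/
noncomputable def gam {X : Type*} [Fintype X] (Q : X → X → ℝ) (f : X → ℝ) (x : X) : ℝ :=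
  ∑ y, (f y - f x) ^ 2 * Q x y

theorem log_lower (x : ℝ) (hx : 1 ≤ x) : 2*(x-1)/(x+1) ≤ Real.log x := by
  have hx0 : (0:ℝ) < x := lt_of_lt_of_le one_pos hx
  set g : ℝ → ℝ := fun y => Real.log y + 4*(y+1)⁻¹ with hg
  have hmono : MonotoneOn g (Set.Ici 1) := by
    have hderiv : ∀ y ∈ Set.Ioi (1:ℝ), HasDerivAt g (y⁻¹ + 4 * (-1 / (y+1)^2)) y := by
      intro y hy
      have hy0 : y ≠ 0 := ne_of_gt (lt_trans one_pos hy)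
      have hy1 : y + 1 ≠ 0 := by have : (1:ℝ) < y := hy; linarith
      exact (Real.hasDerivAt_log hy0).add
        ((((hasDerivAt_id y).add_const 1).inv hy1).const_mul 4)
    apply monotoneOn_of_deriv_nonneg (convex_Ici 1)
    · apply ContinuousOn.add
      · exact Real.continuousOn_log.mono
          (fun y hy => by simp only [Set.mem_Ici, Set.mem_compl_iff, Set.mem_singleton_iff] at *; intro h; rw [h] at hy; linarith)
      · exact continuousOn_const.mul (((continuous_id.add continuous_const).continuousOn).inv₀
          (fun y hy => by simp only [Set.mem_Ici, id, Pi.add_apply, id_eq] at *; intro h; linarith))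
    · rw [interior_Ici]
      intro y hy
      exact ((hderiv y hy).differentiableAt).differentiableWithinAt
    · rw [interior_Ici]
      intro y hy
      rw [(hderiv y hy).deriv]
      have hy' : (1:ℝ) < y := hy
      have h1 : (0:ℝ) < y := by linarith
      have h2 : (0:ℝ) < (y+1)^2 := by positivity
      have h3 : y⁻¹ + 4 * (-1/(y+1)^2) = ((y-1)^2)/(y*(y+1)^2) := by field_simp; ring
      rw [h3]; positivity
  have h1 : g 1 ≤ g x := hmono (by simp) hx hx
  have hg1 : g 1 = 2 := by simp [hg]; norm_num
  rw [hg1] at h1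
  have hx1 : x + 1 ≠ 0 := by linarith
  have h2 : 2*(x-1)/(x+1) = 2 - 4*(x+1)⁻¹ := by field_simp; ring
  rw [h2]
  simp only [hg] at h1
  linarith


theorem logMean_comm (a b : ℝ) : logMean a b = logMean b a := by
  unfold logMean
  rcases eq_or_ne a 0 with h | h
  · simp [h]
  rcases eq_or_ne b 0 with h' | h'
  · simp [h']
  rcases eq_or_ne a b with h'' | h''
  · simp [h'']
  · rw [if_neg (show ¬(a=0∨b=0) by tauto), if_neg h'',
      if_neg (show ¬(b=0∨a=0) by tauto), if_neg (Ne.symm h''),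
      ← neg_sub b a, ← neg_sub (Real.log b), neg_div_neg_eq]

theorem logMean_nonneg {a b : ℝ} (ha : 0 ≤ a) (hb : 0 ≤ b) : 0 ≤ logMean a b := by
  unfold logMean
  rcases eq_or_ne a 0 with h | h; · simp [h]
  rcases eq_or_ne b 0 with h' | h'; · simp [h']
  rcases eq_or_ne a b with h'' | h''; · simpa [h, h', h''] using hb
  rw [if_neg (by tauto), if_neg h'']
  have ha' : 0 < a := lt_of_le_of_ne ha (Ne.symm h)
  have hb' : 0 < b := lt_of_le_of_ne hb (Ne.symm h')
  rcases lt_or_gt_of_ne h'' with hlt | hgt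
  · have : Real.log a < Real.log b := Real.log_lt_log ha' hlt
    have h4 : (a - b)/(Real.log a - Real.log b) = (b - a)/(Real.log b - Real.log a) := by
      rw [← neg_sub b a, ← neg_sub (Real.log b), neg_div_neg_eq]
    rw [h4]
    exact div_nonneg (by linarith) (by linarith)
  · have : Real.log b < Real.log a := Real.log_lt_log hb' hgt
    exact div_nonneg (by linarith) (by linarith)

private theorem logMean_le_arith_aux {a b : ℝ} (hb : 0 ≤ b) (hba : b ≤ a) :
    logMean a b ≤ (a+b)/2 := by
  unfold logMean
  have ha : 0 ≤ a := le_trans hb hba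
  rcases eq_or_ne a 0 with h | h; · simp [h]; linarith
  rcases eq_or_ne b 0 with h' | h'
  · rw [if_pos (Or.inr h')]; positivity
  rcases eq_or_ne a b with h'' | h''; · rw [if_neg (by tauto), if_pos h'']; linarith
  rw [if_neg (by tauto), if_neg h'']
  have hb' : 0 < b := lt_of_le_of_ne hb (Ne.symm h')
  have ha' : 0 < a := lt_of_le_of_ne ha (Ne.symm h)
  have hlt : b < a := lt_of_le_of_ne hba (Ne.symm h'')
  have hlog : Real.log a - Real.log b = Real.log (a/b) := (Real.log_div h h').symm
  have hx : 1 ≤ a/b := (one_le_div hb').mpr hba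
  have hkey : 2*(a - b)/(a + b) ≤ Real.log (a/b) := by
    have := log_lower (a/b) hx
    have heq : 2*(a/b-1)/(a/b+1) = 2*(a-b)/(a+b) := by
      rw [div_eq_div_iff (by positivity) (by positivity)]
      field_simp
    linarith [heq ▸ this]
  have hpos : 0 < 2*(a-b)/(a+b) := div_pos (by linarith) (by linarith)
  rw [hlog]
  calc (a-b)/Real.log (a/b) ≤ (a-b)/(2*(a-b)/(a+b)) := by
        apply div_le_div_of_nonneg_left (by linarith) hpos hkey
    _ = (a+b)/2 := by
        have hne : a - b ≠ 0 := by linarith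
        field_simp
theorem logMean_le_arith {a b : ℝ} (ha : 0 ≤ a) (hb : 0 ≤ b) : logMean a b ≤ (a+b)/2 := by
  rcases le_total b a with hba | hab
  · exact logMean_le_arith_aux hb hba
  · rw [logMean_comm, add_comm]; exact logMean_le_arith_aux ha hab

theorem logMean_div_nat {a : ℝ} (ha : 0 < a) {c : ℝ} (hc : 2 ≤ c) :
    logMean a (a/c) = a * ((c-1)/(c*Real.log c)) := by
  have hc0 : (0:ℝ) < c := by linarith
  have hc1 : (1:ℝ) < c := by linarith
  have hlogc : 0 < Real.log c := Real.log_pos hc1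
  have h1 : a ≠ 0 := ne_of_gt ha
  have h2 : a/c ≠ 0 := by positivity
  have h3 : a ≠ a/c := by
    intro h
    rw [eq_div_iff (ne_of_gt hc0)] at h
    nlinarith
  unfold logMean
  rw [if_neg (by tauto), if_neg h3]
  have hlog : Real.log a - Real.log (a/c) = Real.log c := by
    rw [Real.log_div h1 (ne_of_gt hc0)]; ring
  rw [hlog]
  field_simp

section MatrixAux
open NormedSpace Nat
attribute [local instance] Matrix.linftyOpSemiNormedRing Matrix.linftyOpNormedRing
  Matrix.linftyOpNormedAlgebra

variable {X : Type*} [Fintype X] [DecidableEq X]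

theorem exp_entry (A : Matrix X X ℝ) (i j : X) :
    (exp A) i j = ∑' n : ℕ, (n ! : ℝ)⁻¹ • (A ^ n) i j := by
  rw [exp_eq_tsum ℝ]
  have hs : Summable (fun n : ℕ => (n ! : ℝ)⁻¹ • A ^ n) := expSeries_summable' A
  have hs' : ∀ i, Summable (fun n : ℕ => ((n ! : ℝ)⁻¹ • A ^ n) i) := Pi.summable.mp hs
  calc (∑' n : ℕ, (n ! : ℝ)⁻¹ • A ^ n) i j
      = (∑' n : ℕ, ((n ! : ℝ)⁻¹ • A ^ n) i) j := by erw [tsum_apply hs]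
    _ = ∑' n : ℕ, ((n ! : ℝ)⁻¹ • A ^ n) i j := by rw [tsum_apply (hs' i)]
    _ = ∑' n : ℕ, (n ! : ℝ)⁻¹ • (A ^ n) i j := rfl

theorem pow_entry_nonneg {A : Matrix X X ℝ} (hA : ∀ i j, 0 ≤ A i j) (n : ℕ) :
    ∀ i j, 0 ≤ (A ^ n) i j := by
  induction n with
  | zero => intro i j; simp [Matrix.one_apply]; split <;> norm_num
  | succ n ih =>
    intro i j
    rw [pow_succ, Matrix.mul_apply]
    exact Finset.sum_nonneg fun w _ => mul_nonneg (ih i w) (hA w j)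

theorem exp_entry_nonneg {A : Matrix X X ℝ} (hA : ∀ i j, 0 ≤ A i j) (i j : X) :
    0 ≤ (exp A) i j := by
  rw [exp_entry]
  exact tsum_nonneg fun n => smul_nonneg (by positivity) (pow_entry_nonneg hA n i j)

theorem exp_shift (B : Matrix X X ℝ) (c : ℝ) :
    exp (B + c • (1 : Matrix X X ℝ)) = Real.exp c • exp B := by
  have hcomm : Commute B (c • (1 : Matrix X X ℝ)) := (Commute.one_right B).smul_right c
  rw [Matrix.exp_add_of_commute _ _ hcomm]
  have h1 : c • (1 : Matrix X X ℝ) = Matrix.diagonal (fun _ => c) := by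
    ext i j
    simp only [Matrix.smul_apply, Matrix.one_apply, Matrix.diagonal_apply, smul_eq_mul, mul_ite,
      mul_one, mul_zero]
  rw [h1, Matrix.exp_diagonal]
  ext i j
  rw [Matrix.mul_diagonal]
  simp [Real.exp_eq_exp_ℝ]
  ring

theorem pow_entry_sym {A : Matrix X X ℝ} {π : X → ℝ}
    (hA : ∀ i j, π i * A i j = π j * A j i) (n : ℕ) :
    ∀ i j, π i * (A ^ n) i j = π j * (A ^ n) j i := by
  induction n with
  | zero => intro i j
            by_cases h : i = j
            · subst h; rfl
            · simp [Matrix.one_apply, h, Ne.symm h]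
  | succ n ih =>
    intro i j
    calc π i * (A ^ (n+1)) i j = π i * (A * A ^ n) i j := by rw [_root_.pow_succ']
      _ = ∑ w, (π i * A i w) * (A ^ n) w j := by
          rw [Matrix.mul_apply, Finset.mul_sum]; exact Finset.sum_congr rfl fun w _ => by ring
      _ = ∑ w, A w i * (π w * (A ^ n) w j) := by
          exact Finset.sum_congr rfl fun w _ => by rw [hA i w]; ring
      _ = ∑ w, A w i * (π j * (A ^ n) j w) := by
          exact Finset.sum_congr rfl fun w _ => by rw [ih w j]
      _ = π j * ∑ w, (A ^ n) j w * A w i := by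
          rw [Finset.mul_sum]; exact Finset.sum_congr rfl fun w _ => by ring
      _ = π j * (A ^ n * A) j i := by rw [Matrix.mul_apply]
      _ = π j * (A ^ (n+1)) j i := by rw [pow_succ]

theorem exp_entry_sym {A : Matrix X X ℝ} {π : X → ℝ}
    (hA : ∀ i j, π i * A i j = π j * A j i) (i j : X) :
    π i * (exp A) i j = π j * (exp A) j i := by
  rw [exp_entry, exp_entry, ← tsum_mul_left, ← tsum_mul_left]
  exact tsum_congr fun n => by
    simp only [smul_eq_mul]
    rw [show π i * ((n ! : ℝ)⁻¹ * (A ^ n) i j) = (n ! : ℝ)⁻¹ * (π i * (A ^ n) i j) by ring,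
      pow_entry_sym hA n i j]
    ring


theorem heat_matrix_nonneg {Q : X → X → ℝ} (hQ : ∀ u v, 0 ≤ Q u v) {t : ℝ} (ht : 0 ≤ t)
    (i j : X) :
    0 ≤ (exp (t • (Matrix.of fun x y => Q x y - if x = y then (1 : ℝ) else 0))) i j := by
  have hM : (t • (Matrix.of fun x y => Q x y - if x = y then (1 : ℝ) else 0))
      = (t • (Matrix.of fun x y => Q x y)) + (-t) • (1 : Matrix X X ℝ) := by
    ext i j
    simp only [Matrix.smul_apply, Matrix.of_apply, Matrix.add_apply, Matrix.one_apply,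
      smul_eq_mul, mul_ite, mul_one, mul_zero]
    split <;> ring
  rw [hM, exp_shift]
  rw [Matrix.smul_apply]
  refine mul_nonneg (le_of_lt (Real.exp_pos _)) (exp_entry_nonneg (fun i j => ?_) i j)
  simpa using mul_nonneg ht (hQ i j)

theorem heat_matrix_sym {Q : X → X → ℝ} {π : X → ℝ}
    (hQsym : ∀ u v, π u * Q u v = π v * Q v u) (t : ℝ) (i j : X) :
    π i * (exp (t • (Matrix.of fun x y => Q x y - if x = y then (1 : ℝ) else 0))) i j
      = π j * (exp (t • (Matrix.of fun x y => Q x y - if x = y then (1 : ℝ) else 0))) j i := by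
  refine exp_entry_sym (fun i j => ?_) i j
  simp only [Matrix.smul_apply, Matrix.of_apply, smul_eq_mul]
  by_cases h : i = j
  · subst h; rfl
  · rw [if_neg h, if_neg (Ne.symm h), sub_zero, sub_zero,
      show π i * (t * Q i j) = t * (π i * Q i j) by ring, hQsym i j]
    ring

end MatrixAux

section HeatAux
variable {X : Type*} [Fintype X] [DecidableEq X]

theorem heat_nonneg {Q : X → X → ℝ} (hQ : ∀ u v, 0 ≤ Q u v) {t : ℝ} (ht : 0 ≤ t)
    {f : X → ℝ} (hf : ∀ z, 0 ≤ f z) (z : X) : 0 ≤ heat Q t f z := by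
  have key : ∀ i j, 0 ≤ (NormedSpace.exp
      (t • (Matrix.of fun x y => Q x y - if x = y then (1 : ℝ) else 0))) i j :=
    fun i j => heat_matrix_nonneg hQ ht i j
  simp only [heat, Matrix.mulVec, dotProduct]
  exact Finset.sum_nonneg fun y _ => mul_nonneg (key z y) (hf y)

theorem heat_selfadj {Q : X → X → ℝ} {π : X → ℝ}
    (hQsym : ∀ u v, π u * Q u v = π v * Q v u) (t : ℝ) (g h : X → ℝ) :
    ∑ u, g u * heat Q t h u * π u = ∑ u, heat Q t g u * h u * π u := by
  have key : ∀ i j, π i * (NormedSpace.exp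
      (t • (Matrix.of fun x y => Q x y - if x = y then (1 : ℝ) else 0))) i j
      = π j * (NormedSpace.exp
      (t • (Matrix.of fun x y => Q x y - if x = y then (1 : ℝ) else 0))) j i :=
    fun i j => heat_matrix_sym hQsym t i j
  simp only [heat, Matrix.mulVec, dotProduct]
  set E := NormedSpace.exp
      (t • (Matrix.of fun x y => Q x y - if x = y then (1 : ℝ) else 0)) with hE
  calc ∑ u, g u * (∑ v, E u v * h v) * π u
      = ∑ u, ∑ v, π u * E u v * (g u * h v) := by
        refine Finset.sum_congr rfl fun u _ => ?_
        rw [Finset.mul_sum, Finset.sum_mul]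
        exact Finset.sum_congr rfl fun v _ => by ring
    _ = ∑ u, ∑ v, π v * E v u * (g u * h v) := by
        exact Finset.sum_congr rfl fun u _ => Finset.sum_congr rfl fun v _ => by rw [key u v]
    _ = ∑ v, ∑ u, π v * E v u * (g u * h v) := Finset.sum_comm
    _ = ∑ v, (∑ u, E v u * g u) * h v * π v := by
        refine Finset.sum_congr rfl fun v _ => ?_
        rw [Finset.sum_mul, Finset.sum_mul]
        exact Finset.sum_congr rfl fun u _ => by ring

end HeatAux


theorem double_sum_lower {X : Type*} [Fintype X] [DecidableEq X] (T : X → X → ℝ)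
    (h0 : ∀ u v, 0 ≤ T u v) (x : X) (hxx : T x x = 0) :
    (∑ v, T x v) + (∑ u, T u x) ≤ ∑ u, ∑ v, T u v := by
  have h1 : ∑ u, ∑ v, T u v = (∑ v, T x v) + ∑ u ∈ Finset.univ.erase x, ∑ v, T u v :=
    (Finset.add_sum_erase Finset.univ (fun u => ∑ v, T u v) (Finset.mem_univ x)).symm
  have h2 : ∑ u ∈ Finset.univ.erase x, T u x ≤ ∑ u ∈ Finset.univ.erase x, ∑ v, T u v :=
    Finset.sum_le_sum fun u _ => Finset.single_le_sum (fun v _ => h0 u v) (Finset.mem_univ x)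
  have h3 : ∑ u ∈ Finset.univ.erase x, T u x = (∑ u, T u x) - T x x :=
    Finset.sum_erase_eq_sub (Finset.mem_univ x)
  rw [h3, hxx] at h2
  linarith

/-- **Gradient estimate with explicit constant** for a simple random walk on a finite
connected graph: if the global gradient estimate with constant `κ` holds, then
`Γ(P_t f)(x) ≤ c·e^{-2κt}·‖P_tΓ(f)‖_∞` with `c = D·log D/(D-1)`, `D` the maximal degree. -/
theorem gradient_estimate_simple_random_walk
    {X : Type*} [Fintype X] [DecidableEq X]
    (G : SimpleGraph X) [DecidableRel G.Adj] (hconn : G.Connected)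
    (Q : X → X → ℝ) (π : X → ℝ) (κ : ℝ)
    (hQ : ∀ x y, Q x y = if G.Adj x y then ((G.degree x : ℝ))⁻¹ else 0)
    (hπ : ∀ x, π x = (G.degree x : ℝ) / ∑ v, (G.degree v : ℝ))
    (D : ℕ) (hD : D = Finset.univ.sup fun x => G.degree x) (hD2 : 2 ≤ D)
    (hGE : ∀ ρ : X → ℝ, (∀ z, 0 ≤ ρ z) → ∑ z, ρ z * π z = 1 → ∀ f : X → ℝ, ∀ t : ℝ, 0 ≤ t →
      (1 / 2) * ∑ u, ∑ v,
          (heat Q t f v - heat Q t f u) ^ 2 * logMean (ρ u) (ρ v) * Q u v * π u ≤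
        Real.exp (-2 * κ * t) * ((1 / 2) * ∑ u, ∑ v,
          (f v - f u) ^ 2 * logMean (heat Q t ρ u) (heat Q t ρ v) * Q u v * π u)) :
    ∀ f : X → ℝ, ∀ x : X, ∀ t : ℝ, 0 ≤ t →
      gam Q (heat Q t f) x ≤
        (D * Real.log D / ((D : ℝ) - 1)) * Real.exp (-2 * κ * t) *
          ⨆ z, |heat Q t (gam Q f) z| := by
  intro f x t ht
  -- basic facts about the graph
  have hXne : Nonempty X := by
    by_contra h
    rw [not_nonempty_iff] at h
    rw [Finset.univ_eq_empty, Finset.sup_empty] at hD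
    have : D = 0 := by simpa using hD
    omega
  have huniv : (Finset.univ : Finset X).Nonempty := Finset.univ_nonempty
  have hdegpos : ∀ z, 0 < G.degree z := by
    obtain ⟨x₀, -, hx₀⟩ := Finset.exists_mem_eq_sup Finset.univ huniv (fun x => G.degree x)
    have hx₀2 : 2 ≤ G.degree x₀ := by rw [hD, hx₀] at hD2; exact hD2
    intro z
    by_cases hz : z = x₀
    · subst hz; omega
    · obtain ⟨p⟩ := hconn.preconnected z x₀
      rw [SimpleGraph.degree_pos_iff_exists_adj]
      exact ⟨p.getVert 1, p.adj_snd (SimpleGraph.Walk.not_nil_of_ne hz)⟩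
  set c : ℝ := (D : ℝ) with hc
  have hc2 : (2:ℝ) ≤ c := by rw [hc]; exact_mod_cast hD2
  have hc0 : (0:ℝ) < c := by linarith
  have hc1 : (1:ℝ) < c := by linarith
  have hlogc : 0 < Real.log c := Real.log_pos hc1
  have hSpos : 0 < ∑ v, (G.degree v : ℝ) :=
    Finset.sum_pos (fun v _ => by exact_mod_cast hdegpos v) huniv
  have hπpos : ∀ z, 0 < π z := by
    intro z
    rw [hπ]
    exact div_pos (by exact_mod_cast hdegpos z) hSpos
  have hQ0 : ∀ u v, 0 ≤ Q u v := by
    intro u v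
    rw [hQ]
    split
    · positivity
    · exact le_refl 0
  have hQdiag : ∀ u, Q u u = 0 := by
    intro u; rw [hQ, if_neg (G.loopless.irrefl u)]
  have hπQ : ∀ u v, π u * Q u v = π v * Q v u := by
    intro u v
    rw [hQ, hQ, hπ, hπ]
    by_cases h : G.Adj u v
    · rw [if_pos h, if_pos h.symm]
      have hdu : ((G.degree u : ℝ)) ≠ 0 := by exact_mod_cast (hdegpos u).ne'
      have hdv : ((G.degree v : ℝ)) ≠ 0 := by exact_mod_cast (hdegpos v).ne'
      field_simp
    · rw [if_neg h, if_neg (fun h' => h h'.symm)]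
      ring
  have hQπsym : ∀ u v, Q u v * π u = Q v u * π v := by
    intro u v
    have := hπQ u v
    linarith [hπQ u v]
  have hdD : ∀ z, (G.degree z : ℝ) ≤ c := by
    intro z
    rw [hc, hD]
    exact_mod_cast Finset.le_sup (f := fun x => G.degree x) (Finset.mem_univ z)
  -- the density ρ
  set N : ℝ := ∑ v ∈ G.neighborFinset x, π v with hN
  have hNnonneg : 0 ≤ N := Finset.sum_nonneg fun v _ => (hπpos v).le
  have hNle : N ≤ c * π x := by
    have h1 : ∀ v ∈ G.neighborFinset x, π v ≤ c / ∑ v, (G.degree v : ℝ) := by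
      intro v _
      rw [hπ]
      exact (div_le_div_iff_of_pos_right hSpos).mpr (hdD v)
    calc N ≤ ∑ _v ∈ G.neighborFinset x, (c / ∑ v, (G.degree v : ℝ)) :=
          Finset.sum_le_sum h1
      _ = (G.degree x : ℝ) * (c / ∑ v, (G.degree v : ℝ)) := by
          rw [Finset.sum_const, nsmul_eq_mul, SimpleGraph.card_neighborFinset_eq_degree]
      _ = c * π x := by rw [hπ]; ring
  have hax : 0 < π x + N / c := add_pos_of_pos_of_nonneg (hπpos x) (by positivity)
  set a : ℝ := (π x + N / c)⁻¹ with ha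
  have ha0 : 0 < a := inv_pos.mpr hax
  set ρ : X → ℝ := fun u => if u = x then a else if G.Adj x u then a / c else 0 with hρ
  have hρx : ρ x = a := by simp [hρ]
  have hρadj : ∀ v, G.Adj x v → ρ v = a / c := by
    intro v hv
    have hvx : v ≠ x := fun h => G.loopless.irrefl x (h ▸ hv)
    rw [hρ]; simp only [if_neg hvx, if_pos hv]
  have hρ0 : ∀ z, 0 ≤ ρ z := by
    intro z
    rw [hρ]
    dsimp only
    split
    · exact ha0.le
    · split
      · positivity
      · exact le_refl 0
  have hρsum : ∑ z, ρ z * π z = 1 := by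
    have hsplit : ∀ z, ρ z * π z =
        (if z = x then a * π x else 0) + (if G.Adj x z then (a/c) * π z else 0) := by
      intro z
      by_cases h1 : z = x
      · subst h1
        rw [hρx, if_pos rfl, if_neg (G.loopless.irrefl z)]
        ring
      · rw [if_neg h1]
        by_cases h2 : G.Adj x z
        · rw [hρadj z h2, if_pos h2]; ring
        · rw [hρ]; simp only [if_neg h1, if_neg h2]; ring
    rw [Finset.sum_congr rfl (fun z _ => hsplit z), Finset.sum_add_distrib]
    have h3 : ∑ z, (if z = x then a * π x else 0) = a * π x := by simp
    have h4 : ∑ z, (if G.Adj x z then (a/c) * π z else 0) = (a/c) * N := by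
      rw [← Finset.sum_filter, hN, Finset.mul_sum]
      apply Finset.sum_congr
      · rw [SimpleGraph.neighborFinset_eq_filter]
      · intro z _; rfl
    rw [h3, h4]
    have : a * π x + a / c * N = a * (π x + N / c) := by ring
    rw [this, ha, inv_mul_cancel₀ hax.ne']
  have haπx : 1/2 ≤ a * π x := by
    have h1 : N / c ≤ π x := by
      rw [div_le_iff₀ hc0]
      calc N ≤ c * π x := hNle
        _ = π x * c := by ring
    have h2 : π x + N / c ≤ 2 * π x := by linarith
    have h3 : π x / (2 * π x) ≤ π x / (π x + N / c) :=
      div_le_div_of_nonneg_left (hπpos x).le hax h2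
    have h4 : π x / (2 * π x) = 1/2 := by
      rw [div_eq_iff (ne_of_gt (by linarith [hπpos x] : (0:ℝ) < 2 * π x))]
      ring
    rw [ha]
    calc (1:ℝ)/2 = π x / (2 * π x) := h4.symm
      _ ≤ π x / (π x + N / c) := h3
      _ = (π x + N / c)⁻¹ * π x := by rw [div_eq_mul_inv]; ring
  -- the log mean value
  have hθ : logMean a (a/c) = a * ((c - 1)/(c * Real.log c)) := logMean_div_nat ha0 hc2
  have hgam0 : 0 ≤ gam Q (heat Q t f) x :=
    Finset.sum_nonneg fun y _ => mul_nonneg (sq_nonneg _) (hQ0 x y)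
  have hterm0 : ∀ u v, 0 ≤ (heat Q t f v - heat Q t f u) ^ 2 * logMean (ρ u) (ρ v) * Q u v * π u :=
    fun u v => mul_nonneg (mul_nonneg (mul_nonneg (sq_nonneg _)
      (logMean_nonneg (hρ0 u) (hρ0 v))) (hQ0 u v)) (hπpos u).le
  have key := hGE ρ hρ0 hρsum f t ht
  -- lower bound of the left side
  have hrow : ∑ v, (heat Q t f v - heat Q t f x) ^ 2 * logMean (ρ x) (ρ v) * Q x v * π x
      = logMean a (a/c) * (π x * gam Q (heat Q t f) x) := by
    have h1 : ∀ v, (heat Q t f v - heat Q t f x) ^ 2 * logMean (ρ x) (ρ v) * Q x v * π x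
        = logMean a (a/c) * ((heat Q t f v - heat Q t f x) ^ 2 * Q x v * π x) := by
      intro v
      by_cases h2 : G.Adj x v
      · rw [hρx, hρadj v h2]; ring
      · rw [hQ, if_neg h2]; ring
    rw [Finset.sum_congr rfl fun v _ => h1 v, ← Finset.mul_sum]
    congr 1
    rw [gam, Finset.mul_sum]
    exact Finset.sum_congr rfl fun v _ => by ring
  have hcol : ∑ u, (heat Q t f x - heat Q t f u) ^ 2 * logMean (ρ u) (ρ x) * Q u x * π u
      = logMean a (a/c) * (π x * gam Q (heat Q t f) x) := by
    have h1 : ∀ u, (heat Q t f x - heat Q t f u) ^ 2 * logMean (ρ u) (ρ x) * Q u x * π u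
        = logMean a (a/c) * ((heat Q t f u - heat Q t f x) ^ 2 * Q x u * π x) := by
      intro u
      by_cases h2 : G.Adj x u
      · rw [hρx, hρadj u h2]
        calc (heat Q t f x - heat Q t f u) ^ 2 * logMean (a/c) a * Q u x * π u
            = (heat Q t f u - heat Q t f x) ^ 2 * logMean a (a/c) * (Q u x * π u) := by
              rw [logMean_comm]; ring
          _ = (heat Q t f u - heat Q t f x) ^ 2 * logMean a (a/c) * (Q x u * π x) := by
              rw [hQπsym u x]
          _ = logMean a (a/c) * ((heat Q t f u - heat Q t f x) ^ 2 * Q x u * π x) := by ring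
      · have h3 : Q u x = 0 := by rw [hQ, if_neg (fun h' => h2 h'.symm)]
        have h4 : Q x u = 0 := by rw [hQ, if_neg h2]
        rw [h3, h4]; ring
    rw [Finset.sum_congr rfl fun u _ => h1 u, ← Finset.mul_sum]
    congr 1
    rw [gam, Finset.mul_sum]
    exact Finset.sum_congr rfl fun v _ => by ring
  have hxx : (heat Q t f x - heat Q t f x) ^ 2 * logMean (ρ x) (ρ x) * Q x x * π x = 0 := by
    rw [sub_self]; ring
  have hdouble := double_sum_lower
    (fun u v => (heat Q t f v - heat Q t f u) ^ 2 * logMean (ρ u) (ρ v) * Q u v * π u)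
    hterm0 x hxx
  have hlow : logMean a (a/c) * (π x * gam Q (heat Q t f) x) ≤
      (1/2) * ∑ u, ∑ v, (heat Q t f v - heat Q t f u) ^ 2 * logMean (ρ u) (ρ v) * Q u v * π u := by
    rw [hrow, hcol] at hdouble
    linarith
  -- upper bound of the right side
  have hg0 : ∀ z, 0 ≤ heat Q t ρ z := fun z => heat_nonneg hQ0 ht hρ0 z
  have hbdd : BddAbove (Set.range fun z => |heat Q t (gam Q f) z|) :=
    Set.Finite.bddAbove (Set.finite_range _)
  have hC0 : ∀ u, heat Q t (gam Q f) u ≤ ⨆ z, |heat Q t (gam Q f) z| :=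
    fun u => le_trans (le_abs_self _) (le_ciSup hbdd u)
  have hup : (1/2) * ∑ u, ∑ v, (f v - f u)^2 * logMean (heat Q t ρ u) (heat Q t ρ v) * Q u v * π u
      ≤ (1/2) * ⨆ z, |heat Q t (gam Q f) z| := by
    have s1 : ∀ u v, (f v - f u)^2 * logMean (heat Q t ρ u) (heat Q t ρ v) * Q u v * π u ≤
        (f v - f u)^2 * ((heat Q t ρ u + heat Q t ρ v)/2) * Q u v * π u := by
      intro u v
      have h2 : (f v - f u)^2 * logMean (heat Q t ρ u) (heat Q t ρ v) ≤
          (f v - f u)^2 * ((heat Q t ρ u + heat Q t ρ v)/2) :=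
        mul_le_mul_of_nonneg_left (logMean_le_arith (hg0 u) (hg0 v)) (sq_nonneg _)
      exact mul_le_mul_of_nonneg_right (mul_le_mul_of_nonneg_right h2 (hQ0 u v)) (hπpos u).le
    have hsw : ∑ u, ∑ v, (f v - f u)^2 * heat Q t ρ v * Q u v * π u
        = ∑ u, ∑ v, (f v - f u)^2 * heat Q t ρ u * Q u v * π u := by
      rw [Finset.sum_comm]
      refine Finset.sum_congr rfl fun u _ => Finset.sum_congr rfl fun v _ => ?_
      calc (f u - f v)^2 * heat Q t ρ u * Q v u * π v
          = (f v - f u)^2 * heat Q t ρ u * (Q v u * π v) := by ring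
        _ = (f v - f u)^2 * heat Q t ρ u * (Q u v * π u) := by rw [← hQπsym u v]
        _ = (f v - f u)^2 * heat Q t ρ u * Q u v * π u := by ring
    have s2 : ∑ u, ∑ v, (f v - f u)^2 * ((heat Q t ρ u + heat Q t ρ v)/2) * Q u v * π u
        = ∑ u, heat Q t ρ u * gam Q f u * π u := by
      have hhalf : ∀ u : X, ∑ v, (f v - f u)^2 * ((heat Q t ρ u + heat Q t ρ v)/2) * Q u v * π u
          = (1/2) * (∑ v, (f v - f u)^2 * heat Q t ρ u * Q u v * π u)
            + (1/2) * (∑ v, (f v - f u)^2 * heat Q t ρ v * Q u v * π u) := by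
        intro u
        rw [Finset.mul_sum, Finset.mul_sum, ← Finset.sum_add_distrib]
        exact Finset.sum_congr rfl fun v _ => by ring
      rw [Finset.sum_congr rfl fun u _ => hhalf u, Finset.sum_add_distrib,
        ← Finset.mul_sum, ← Finset.mul_sum, hsw]
      have hgu : ∀ u : X, ∑ v, (f v - f u)^2 * heat Q t ρ u * Q u v * π u
          = heat Q t ρ u * gam Q f u * π u := by
        intro u
        rw [gam, Finset.mul_sum, Finset.sum_mul]
        exact Finset.sum_congr rfl fun v _ => by ring
      rw [Finset.sum_congr rfl fun u _ => hgu u]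
      ring
    have s3 : ∑ u, heat Q t ρ u * gam Q f u * π u
        = ∑ u, ρ u * heat Q t (gam Q f) u * π u := (heat_selfadj hπQ t ρ (gam Q f)).symm
    have s4 : ∑ u, ρ u * heat Q t (gam Q f) u * π u ≤ ⨆ z, |heat Q t (gam Q f) z| := by
      calc ∑ u, ρ u * heat Q t (gam Q f) u * π u
          ≤ ∑ u, ρ u * (⨆ z, |heat Q t (gam Q f) z|) * π u :=
            Finset.sum_le_sum fun u _ => mul_le_mul_of_nonneg_right
              (mul_le_mul_of_nonneg_left (hC0 u) (hρ0 u)) (hπpos u).le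
        _ = (⨆ z, |heat Q t (gam Q f) z|) * ∑ u, ρ u * π u := by
            rw [Finset.mul_sum]
            exact Finset.sum_congr rfl fun u _ => by ring
        _ = ⨆ z, |heat Q t (gam Q f) z| := by rw [hρsum, mul_one]
    have s5 : ∑ u, ∑ v, (f v - f u)^2 * logMean (heat Q t ρ u) (heat Q t ρ v) * Q u v * π u
        ≤ ∑ u, ∑ v, (f v - f u)^2 * ((heat Q t ρ u + heat Q t ρ v)/2) * Q u v * π u :=
      Finset.sum_le_sum fun u _ => Finset.sum_le_sum fun v _ => s1 u v
    have := le_trans s5 (le_of_eq s2)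
    have := le_trans this (le_trans (le_of_eq s3) s4)
    linarith
  -- combine everything
  have hfin1 : logMean a (a/c) * (π x * gam Q (heat Q t f) x) ≤
      Real.exp (-2*κ*t) * ((1/2) * ⨆ z, |heat Q t (gam Q f) z|) :=
    le_trans (le_trans hlow key) (mul_le_mul_of_nonneg_left hup (Real.exp_nonneg _))
  have hk : 0 < (c-1)/(c*Real.log c) := div_pos (by linarith) (by positivity)
  rw [hθ] at hfin1
  have h9 : a * ((c-1)/(c*Real.log c)) * (π x * gam Q (heat Q t f) x)
      = ((c-1)/(c*Real.log c)) * ((a * π x) * gam Q (heat Q t f) x) := by ring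
  rw [h9] at hfin1
  have h8 : ((c-1)/(c*Real.log c)) * ((1/2) * gam Q (heat Q t f) x)
      ≤ ((c-1)/(c*Real.log c)) * ((a * π x) * gam Q (heat Q t f) x) :=
    mul_le_mul_of_nonneg_left (mul_le_mul_of_nonneg_right haπx hgam0) hk.le
  have h10 : c * Real.log c / (c-1) * Real.exp (-2*κ*t) * (⨆ z, |heat Q t (gam Q f) z|)
      = (Real.exp (-2*κ*t) * ⨆ z, |heat Q t (gam Q f) z|) / ((c-1)/(c*Real.log c)) := by
    rw [div_div_eq_mul_div]
    ring
  rw [h10, le_div_iff₀ hk]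
  nlinarith [hfin1, h8]
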